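/- Let Φ be a real random variable with EΦ = 0, Var(Φ) = 1, and E|Φ|^t ≤ τ for some t > 2 and τ > 0. Then Prob{Φ ≥ 0} > 0.25·τ^(-2/(t-2)) and Prob{Φ ≤ 0} > 0.25·τ^(-2/(t-2)). -/

import Mathlib

open MeasureTheory
open scoped ENNReal

private lemma abs_le_one_add_sq' (x : ℝ) : |x| ≤ 1 + x ^ 2 := by
  nlinarith [sq_nonneg (|x| - 1), sq_abs x, abs_nonneg x]

private lemma aux_half {Ω : Type*} [MeasureSpace Ω] [IsProbabilityMeasure (volume : Measure Ω)]
    (Φ : Ω → ℝ) (t τ : ℝ) (ht : 2 < t) (hτ : 0 < τ)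
    (hmeas : Measurable Φ)
    (hint2 : Integrable (fun ω => (Φ ω) ^ 2))
    (hintt : Integrable (fun ω => |Φ ω| ^ t))
    (hmean : ∫ ω, Φ ω = 0)
    (hvar : ∫ ω, (Φ ω) ^ 2 = 1)
    (hmom : ∫ ω, |Φ ω| ^ t ≤ τ) :
    ((volume : Measure Ω) {ω | 0 ≤ Φ ω}).toReal > 0.25 * τ ^ (-2 / (t - 2)) := by
  set μ := (volume : Measure Ω) with hμ
  have ht2 : (0:ℝ) < t - 2 := by linarith
  have ht1 : (0:ℝ) < t - 1 := by linarith
  have ht0 : (0:ℝ) < t := by linarith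
  -- integrability of |Φ| and Φ
  have hintabs : Integrable (fun ω => |Φ ω|) μ := by
    refine Integrable.mono' ((integrable_const (1:ℝ)).add hint2)
      hmeas.abs.aestronglyMeasurable ?_
    filter_upwards with ω
    simpa [abs_abs] using abs_le_one_add_sq' (Φ ω)
  have hintΦ : Integrable Φ μ := by
    refine Integrable.mono' hintabs hmeas.aestronglyMeasurable ?_
    filter_upwards with ω
    simp
  set M := ∫ ω, |Φ ω| ∂μ with hMdef
  have hM0 : 0 ≤ M := integral_nonneg fun ω => abs_nonneg _
  set g : Ω → ℝ≥0∞ := fun ω => ENNReal.ofReal |Φ ω| with hgdef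
  have gmeas : AEMeasurable g μ := (hmeas.abs.ennreal_ofReal).aemeasurable
  -- lintegral computations
  have h2 : ∫⁻ ω, g ω ^ (2:ℝ) ∂μ = 1 := by
    have e : ∀ ω, g ω ^ (2:ℝ) = ENNReal.ofReal ((Φ ω) ^ 2) := fun ω => by
      rw [show g ω = ENNReal.ofReal |Φ ω| from rfl,
        ENNReal.ofReal_rpow_of_nonneg (abs_nonneg _) (by norm_num : (0:ℝ) ≤ 2)]
      congr 1
      rw [show (2:ℝ) = ((2:ℕ):ℝ) by norm_num, Real.rpow_natCast, sq_abs]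
    simp_rw [e]
    rw [← ofReal_integral_eq_lintegral_ofReal hint2 (ae_of_all _ fun ω => sq_nonneg _), hvar]
    simp
  have hT : ∫⁻ ω, g ω ^ t ∂μ ≤ ENNReal.ofReal τ := by
    have e : ∀ ω, g ω ^ t = ENNReal.ofReal (|Φ ω| ^ t) := fun ω =>
      ENNReal.ofReal_rpow_of_nonneg (abs_nonneg _) ht0.le
    simp_rw [e]
    rw [← ofReal_integral_eq_lintegral_ofReal hintt
      (ae_of_all _ fun ω => Real.rpow_nonneg (abs_nonneg _) t)]
    exact ENNReal.ofReal_le_ofReal hmom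
  have h1 : ∫⁻ ω, g ω ∂μ = ENNReal.ofReal M :=
    (ofReal_integral_eq_lintegral_ofReal hintabs (ae_of_all _ fun ω => abs_nonneg _)).symm
  -- interpolation Hölder: exponents p = (t-1)/(t-2), q = t-1
  have hpq : ((t-1)/(t-2)).HolderConjugate (t-1) := by
    constructor
    · rw [inv_one]; field_simp
      ring
    · exact div_pos ht1 ht2
    · exact ht1
  have θpos : (0:ℝ) < (t-2)/(t-1) := div_pos ht2 ht1
  have holder1 := ENNReal.lintegral_mul_le_Lp_mul_Lq μ hpq
    (f := fun ω => g ω ^ ((t-2)/(t-1))) (g := fun ω => g ω ^ (t/(t-1)))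
    (gmeas.pow_const _) (gmeas.pow_const _)
  have e1 : (fun ω => ((fun ω => g ω ^ ((t-2)/(t-1))) * fun ω => g ω ^ (t/(t-1))) ω)
      = fun ω => g ω ^ (2:ℝ) := by
    funext ω
    simp only [Pi.mul_apply]
    rw [← ENNReal.rpow_add_of_nonneg _ _ θpos.le (by positivity)]
    congr 1
    field_simp
    ring
  have e2 : (fun ω => (g ω ^ ((t-2)/(t-1))) ^ ((t-1)/(t-2))) = g := by
    funext ω
    rw [← ENNReal.rpow_mul]
    rw [show (t-2)/(t-1) * ((t-1)/(t-2)) = 1 by field_simp]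
    exact ENNReal.rpow_one _
  have e3 : (fun ω => (g ω ^ (t/(t-1))) ^ (t-1)) = fun ω => g ω ^ t := by
    funext ω
    rw [← ENNReal.rpow_mul]
    congr 1
    field_simp
  simp only [e1] at holder1
  rw [show (fun (a:Ω) => (fun ω => g ω ^ ((t-2)/(t-1))) a ^ ((t-1)/(t-2))) = g from e2] at holder1
  rw [show (fun (a:Ω) => (fun ω => g ω ^ (t/(t-1))) a ^ (t-1)) = fun ω => g ω ^ t from e3]
    at holder1
  rw [h2, h1] at holder1
  have holder1' : (1:ℝ≥0∞) ≤ ENNReal.ofReal M ^ ((t-2)/(t-1)) * ENNReal.ofReal τ ^ (1/(t-1)) := by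
    refine holder1.trans ?_
    rw [one_div_div]
    exact mul_le_mul_right (ENNReal.rpow_le_rpow hT (by positivity)) _
  have key1 : (1:ℝ) ≤ M ^ ((t-2)/(t-1)) * τ ^ (1/(t-1)) := by
    rw [ENNReal.ofReal_rpow_of_nonneg hM0 θpos.le,
      ENNReal.ofReal_rpow_of_nonneg hτ.le (by positivity),
      ← ENNReal.ofReal_mul (by positivity)] at holder1'
    exact ENNReal.one_le_ofReal.mp holder1'
  -- lower bound on M
  have hMlb : τ ^ (-1/(t-2)) ≤ M := by
    have hτp : (0:ℝ) < τ ^ (1/(t-1)) := Real.rpow_pos_of_pos hτ _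
    have h1' : τ ^ (-(1/(t-1))) ≤ M ^ ((t-2)/(t-1)) := by
      rw [Real.rpow_neg hτ.le, ← one_div]
      rw [div_le_iff₀ hτp]
      linarith [key1]
    have h2' := Real.rpow_le_rpow (Real.rpow_nonneg hτ.le _) h1'
      (le_of_lt (div_pos ht1 ht2))
    rw [← Real.rpow_mul hτ.le, ← Real.rpow_mul hM0]
      at h2'
    rw [show (t-2)/(t-1) * ((t-1)/(t-2)) = 1 by field_simp, Real.rpow_one] at h2'
    rw [show -(1/(t-1)) * ((t-1)/(t-2)) = -1/(t-2) by field_simp] at h2'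
    exact h2'
  -- the set A
  set A : Set Ω := {ω | 0 ≤ Φ ω} with hAdef
  have hA : MeasurableSet A := measurableSet_le measurable_const hmeas
  have hIA : ∫ ω in A, |Φ ω| ∂μ = M / 2 := by
    have eA : ∫ ω in A, |Φ ω| ∂μ = ∫ ω in A, Φ ω ∂μ :=
      setIntegral_congr_fun hA fun x hx => abs_of_nonneg hx
    have eAc : ∫ ω in Aᶜ, |Φ ω| ∂μ = - ∫ ω in Aᶜ, Φ ω ∂μ := by
      rw [← integral_neg]
      exact setIntegral_congr_fun hA.compl fun x hx => abs_of_neg (lt_of_not_ge hx)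
    have s1 : ∫ ω in A, Φ ω ∂μ + ∫ ω in Aᶜ, Φ ω ∂μ = 0 := by
      rw [integral_add_compl hA hintΦ]; exact hmean
    have s2 : ∫ ω in A, |Φ ω| ∂μ + ∫ ω in Aᶜ, |Φ ω| ∂μ = M := by
      rw [integral_add_compl hA hintabs]
    rw [eA]
    rw [eA, eAc] at s2
    linarith
  -- Hölder on A
  have hpq2 : t.HolderConjugate (t/(t-1)) := by
    constructor
    · rw [inv_div, inv_one]; field_simp
      ring
    · exact ht0
    · exact div_pos ht0 ht1
  set ind : Ω → ℝ≥0∞ := A.indicator (fun _ => (1:ℝ≥0∞)) with hind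
  have indmeas : AEMeasurable ind μ := ((measurable_const.indicator hA)).aemeasurable
  have holder2 := ENNReal.lintegral_mul_le_Lp_mul_Lq μ hpq2 gmeas indmeas
  have eL : (fun ω => (g * ind) ω) = fun ω => A.indicator g ω := by
    funext ω
    by_cases h : ω ∈ A <;> simp [hind, Set.indicator_of_mem, Set.indicator_of_notMem, h]
  have hindint : ∫⁻ ω, ind ω ∂μ = μ A := by
    rw [hind, lintegral_indicator hA _]
    simp
  have eR : (fun ω => ind ω ^ (t/(t-1))) = ind := by
    funext ω
    by_cases h : ω ∈ A <;>
      simp [hind, Set.indicator_of_mem, Set.indicator_of_notMem, h,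
        ENNReal.zero_rpow_of_pos (div_pos ht0 ht1)]
  rw [eL, lintegral_indicator hA _] at holder2
  rw [show (fun (a:Ω) => ind a ^ (t/(t-1))) = ind from eR, hindint] at holder2
  have hgA : ∫⁻ ω in A, g ω ∂μ = ENNReal.ofReal (M/2) := by
    rw [← hIA]
    exact (ofReal_integral_eq_lintegral_ofReal hintabs.integrableOn
      (ae_of_all _ fun ω => abs_nonneg _)).symm
  rw [hgA] at holder2
  set P := (μ A).toReal with hPdef
  have hP0 : 0 ≤ P := ENNReal.toReal_nonneg
  have hμA : μ A = ENNReal.ofReal P := (ENNReal.ofReal_toReal (measure_ne_top μ A)).symm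
  have key2 : M / 2 ≤ τ ^ (1/t) * P ^ ((t-1)/t) := by
    have h3 : ENNReal.ofReal (M/2) ≤
        ENNReal.ofReal τ ^ (1/t) * ENNReal.ofReal P ^ ((t-1)/t) := by
      refine holder2.trans ?_
      rw [hμA, one_div_div]
      exact mul_le_mul_left (ENNReal.rpow_le_rpow hT (by positivity)) _
    rw [ENNReal.ofReal_rpow_of_nonneg hτ.le (by positivity),
      ENNReal.ofReal_rpow_of_nonneg hP0 (by positivity),
      ← ENNReal.ofReal_mul (by positivity)] at h3
    exact (ENNReal.ofReal_le_ofReal_iff (by positivity)).mp h3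
  -- final algebra
  have hτt : (0:ℝ) < τ ^ (1/t) := Real.rpow_pos_of_pos hτ _
  have c_def : τ ^ (-1/(t-2)) / 2 * τ ^ (-(1/t)) ≤ P ^ ((t-1)/t) := by
    have hM2 : τ ^ (-1/(t-2)) / 2 ≤ M / 2 := by linarith
    have : M / 2 * τ ^ (-(1/t)) ≤ P ^ ((t-1)/t) := by
      rw [Real.rpow_neg hτ.le, ← div_eq_mul_inv, div_le_iff₀ hτt]
      linarith [key2]
    refine le_trans ?_ this
    have : (0:ℝ) < τ ^ (-(1/t)) := Real.rpow_pos_of_pos hτ _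
    nlinarith
  have hcpos : (0:ℝ) < τ ^ (-1/(t-2)) / 2 * τ ^ (-(1/t)) := by
    have := Real.rpow_pos_of_pos hτ (-1/(t-2))
    have := Real.rpow_pos_of_pos hτ (-(1/t))
    positivity
  have hPlb : (τ ^ (-1/(t-2)) / 2 * τ ^ (-(1/t))) ^ (t/(t-1)) ≤ P := by
    have h4 := Real.rpow_le_rpow hcpos.le c_def (le_of_lt (div_pos ht0 ht1))
    rw [← Real.rpow_mul hP0, show (t-1)/t * (t/(t-1)) = 1 by field_simp, Real.rpow_one] at h4
    exact h4
  have hrw : (τ ^ (-1/(t-2)) / 2 * τ ^ (-(1/t))) ^ (t/(t-1))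
      = (1/2) ^ (t/(t-1)) * τ ^ (-2/(t-2)) := by
    have e5 : τ ^ (-1/(t-2)) / 2 * τ ^ (-(1/t)) = (1/2) * τ ^ (-1/(t-2) + -(1/t)) := by
      rw [Real.rpow_add hτ]; ring
    rw [e5, Real.mul_rpow (by norm_num) (Real.rpow_nonneg hτ.le _), ← Real.rpow_mul hτ.le]
    congr 2
    field_simp
    ring
  have hexp : t/(t-1) < 2 := by rw [div_lt_iff₀ ht1]; linarith
  have hbase : (0.25:ℝ) < (1/2:ℝ) ^ (t/(t-1)) := by
    have := Real.rpow_lt_rpow_of_exponent_gt (x := (1/2:ℝ)) (by norm_num) (by norm_num) hexp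
    calc (0.25:ℝ) = (1/2:ℝ) ^ (2:ℝ) := by
          rw [show (2:ℝ) = ((2:ℕ):ℝ) by norm_num, Real.rpow_natCast]; norm_num
      _ < (1/2:ℝ) ^ (t/(t-1)) := this
  have hτr : (0:ℝ) < τ ^ (-2/(t-2)) := Real.rpow_pos_of_pos hτ _
  calc (0.25:ℝ) * τ ^ (-2/(t-2)) < (1/2) ^ (t/(t-1)) * τ ^ (-2/(t-2)) := by
        exact mul_lt_mul_of_pos_right hbase hτr
    _ = (τ ^ (-1/(t-2)) / 2 * τ ^ (-(1/t))) ^ (t/(t-1)) := hrw.symm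
    _ ≤ P := hPlb

theorem stmt_0 {Ω : Type*} [MeasureSpace Ω] [IsProbabilityMeasure (volume : Measure Ω)]
    (Φ : Ω → ℝ) (t τ : ℝ) (ht : 2 < t) (hτ : 0 < τ)
    (hmeas : Measurable Φ)
    (hint2 : Integrable (fun ω => (Φ ω) ^ 2))
    (hintt : Integrable (fun ω => |Φ ω| ^ t))
    (hmean : ∫ ω, Φ ω = 0)
    (hvar : ∫ ω, (Φ ω) ^ 2 = 1)
    (hmom : ∫ ω, |Φ ω| ^ t ≤ τ) :
    ((volume : Measure Ω) {ω | 0 ≤ Φ ω}).toReal > 0.25 * τ ^ (-2 / (t - 2)) ∧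
      ((volume : Measure Ω) {ω | Φ ω ≤ 0}).toReal > 0.25 * τ ^ (-2 / (t - 2)) := by
  constructor
  · exact aux_half Φ t τ ht hτ hmeas hint2 hintt hmean hvar hmom
  · have h := aux_half (fun ω => -Φ ω) t τ ht hτ hmeas.neg
      (by simpa using hint2) (by simpa using hintt)
      (by rw [integral_neg]; simp [hmean]) (by simpa using hvar) (by simpa using hmom)
    simpa [neg_nonneg] using h
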